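/- Let ss_n be the number of super Schröder paths of order n, and hs_n be the total number of humps in all Schröder paths of order n. Then ss_n = 2·hs_n + 1. -/

import Mathlib

inductive SStep | U | F | D
deriving DecidableEq

/-- A super Schröder path of order `n`. -/
def IsSuperSchroeder (n : ℕ) (w : List SStep) : Prop :=
  w.count SStep.U + w.count SStep.F = n ∧ w.count SStep.U = w.count SStep.D

/-- A Schröder path of order `n`: additionally never goes below the diagonal. -/
def IsSchroeder (n : ℕ) (w : List SStep) : Prop :=
  IsSuperSchroeder n w ∧ ∀ p, p <+: w → p.count SStep.D ≤ p.count SStep.U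

def IsHumpAt (w : List SStep) (i : ℕ) : Prop :=
  ∃ k, w[i]? = some SStep.U ∧ (∀ j < k, w[i + 1 + j]? = some SStep.F) ∧
    w[i + 1 + k]? = some SStep.D

namespace SSAux
open SStep

def cu (w : List SStep) : ℕ := w.count SStep.U
def cd (w : List SStep) : ℕ := w.count SStep.D
def cf (w : List SStep) : ℕ := w.count SStep.F

lemma cu_eq (w : List SStep) : cu w = w.count SStep.U := rfl
lemma cd_eq (w : List SStep) : cd w = w.count SStep.D := rfl
lemma cf_eq (w : List SStep) : cf w = w.count SStep.F := rfl

@[simp] lemma cu_nil : cu [] = 0 := rfl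
@[simp] lemma cd_nil : cd [] = 0 := rfl
@[simp] lemma cf_nil : cf [] = 0 := rfl
@[simp] lemma cu_cons (a : SStep) (w : List SStep) :
    cu (a :: w) = cu w + (if a = U then 1 else 0) := by simp [cu, List.count_cons]
@[simp] lemma cd_cons (a : SStep) (w : List SStep) :
    cd (a :: w) = cd w + (if a = D then 1 else 0) := by simp [cd, List.count_cons]
@[simp] lemma cf_cons (a : SStep) (w : List SStep) :
    cf (a :: w) = cf w + (if a = F then 1 else 0) := by simp [cf, List.count_cons]
@[simp] lemma cu_append (v w : List SStep) : cu (v ++ w) = cu v + cu w := by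
  simp [cu, List.count_append]
@[simp] lemma cd_append (v w : List SStep) : cd (v ++ w) = cd v + cd w := by
  simp [cd, List.count_append]
@[simp] lemma cf_append (v w : List SStep) : cf (v ++ w) = cf v + cf w := by
  simp [cf, List.count_append]

def flats (n : ℕ) : List SStep := List.replicate n F

def comS : SStep → SStep | U => D | D => U | F => F

@[simp] lemma comS_U : comS U = D := rfl
@[simp] lemma comS_D : comS D = U := rfl
@[simp] lemma comS_F : comS F = F := rfl

def com (w : List SStep) : List SStep := w.map comS

@[simp] lemma com_nil : com [] = [] := rfl
@[simp] lemma com_cons (a : SStep) (w : List SStep) : com (a :: w) = comS a :: com w := rfl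
@[simp] lemma com_append (v w : List SStep) : com (v ++ w) = com v ++ com w := List.map_append ..
@[simp] lemma comS_comS (a : SStep) : comS (comS a) = a := by cases a <;> rfl
@[simp] lemma com_com (w : List SStep) : com (com w) = w := by
  simp [com, Function.comp_def]
@[simp] lemma com_length (w : List SStep) : (com w).length = w.length := List.length_map ..
@[simp] lemma cu_com (w : List SStep) : cu (com w) = cd w := by
  induction w with
  | nil => rfl
  | cons a t ih => cases a <;> simp [ih]
@[simp] lemma cd_com (w : List SStep) : cd (com w) = cu w := by
  induction w with
  | nil => rfl
  | cons a t ih => cases a <;> simp [ih]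
@[simp] lemma cf_com (w : List SStep) : cf (com w) = cf w := by
  induction w with
  | nil => rfl
  | cons a t ih => cases a <;> simp [ih]

@[simp] lemma flats_length (n : ℕ) : (flats n).length = n := List.length_replicate ..
@[simp] lemma cu_flats (n : ℕ) : cu (flats n) = 0 := by
  simp [flats, cu, List.count_replicate]
@[simp] lemma cd_flats (n : ℕ) : cd (flats n) = 0 := by
  simp [flats, cd, List.count_replicate]
@[simp] lemma cf_flats (n : ℕ) : cf (flats n) = n := by
  simp [flats, cf, List.count_replicate]
@[simp] lemma com_flats (n : ℕ) : com (flats n) = flats n := by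
  simp [flats, com, List.map_replicate]

lemma length_eq_counts (w : List SStep) : w.length = cu w + cd w + cf w := by
  induction w with
  | nil => rfl
  | cons a t ih => cases a <;> simp [ih] <;> omega

/-- split h t: assuming current height h, find first descent below 0. -/
def split : ℕ → List SStep → List SStep × List SStep
  | _, [] => ([], [])
  | 0, D :: t => ([], t)
  | (h+1), D :: t => let p := split h t; (D :: p.1, p.2)
  | h, U :: t => let p := split (h+1) t; (U :: p.1, p.2)
  | h, F :: t => let p := split h t; (F :: p.1, p.2)

lemma split_snd_length_le : ∀ (t : List SStep) (h : ℕ), (split h t).2.length ≤ t.length := by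
  intro t
  induction t with
  | nil => intro h; simp [split]
  | cons a t ih =>
    intro h
    cases a with
    | U => simpa [split] using (ih (h+1)).trans (Nat.le_succ _)
    | F => simpa [split] using (ih h).trans (Nat.le_succ _)
    | D =>
      cases h with
      | zero => simp [split]
      | succ h => simpa [split] using (ih h).trans (Nat.le_succ _)

lemma split_fst_length_le : ∀ (t : List SStep) (h : ℕ), (split h t).1.length ≤ t.length := by
  intro t
  induction t with
  | nil => intro h; simp [split]
  | cons a t ih =>
    intro h
    cases a with
    | U => simpa [split] using ih (h+1)
    | F => simpa [split] using ih h
    | D =>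
      cases h with
      | zero => simp [split]
      | succ h => simpa [split] using ih h

/-- success of split -/
lemma split_spec : ∀ (t : List SStep) (h : ℕ), cu t + h < cd t →
    t = (split h t).1 ++ D :: (split h t).2 ∧
    (∀ p, p <+: (split h t).1 → cd p ≤ cu p + h) ∧
    cd (split h t).1 = cu (split h t).1 + h := by
  intro t
  induction t with
  | nil => intro h hh; simp at hh
  | cons a t ih =>
    intro h hh
    cases a with
    | U =>
      have hh' : cu t + (h+1) < cd t := by simp at hh ⊢; omega
      obtain ⟨h1, h2, h3⟩ := ih (h+1) hh'
      refine ⟨?_, ?_, ?_⟩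
      · simpa [split] using congrArg (U :: ·) h1
      · intro p hp
        simp only [split] at hp
        rcases List.prefix_cons_iff.mp hp with rfl | ⟨q, rfl, hq⟩
        · simp
        · have := h2 q hq; simp at this ⊢; omega
      · have := h3; simp [split] at this ⊢; omega
    | F =>
      have hh' : cu t + h < cd t := by simp at hh ⊢; omega
      obtain ⟨h1, h2, h3⟩ := ih h hh'
      refine ⟨?_, ?_, ?_⟩
      · simpa [split] using congrArg (F :: ·) h1
      · intro p hp
        simp only [split] at hp
        rcases List.prefix_cons_iff.mp hp with rfl | ⟨q, rfl, hq⟩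
        · simp
        · have := h2 q hq; simp at this ⊢; omega
      · have := h3; simp [split] at this ⊢; omega
    | D =>
      cases h with
      | zero => refine ⟨by simp [split], by simp [split], by simp [split]⟩
      | succ h =>
        have hh' : cu t + h < cd t := by simp at hh ⊢; omega
        obtain ⟨h1, h2, h3⟩ := ih h hh'
        refine ⟨?_, ?_, ?_⟩
        · simpa [split] using congrArg (D :: ·) h1
        · intro p hp
          simp only [split] at hp
          rcases List.prefix_cons_iff.mp hp with rfl | ⟨q, rfl, hq⟩
          · simp
          · have := h2 q hq; simp at this ⊢; omega
        · have := h3; simp [split] at this ⊢; omega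

/-- uniqueness of split -/
lemma split_eq : ∀ (C : List SStep) (h : ℕ) (T : List SStep),
    (∀ p, p <+: C → cd p ≤ cu p + h) → cd C = cu C + h →
    split h (C ++ D :: T) = (C, T) := by
  intro C
  induction C with
  | nil => intro h T _ hC; simp at hC; subst hC; simp [split]
  | cons a C ih =>
    intro h T hpre hC
    cases a with
    | U =>
      have := ih (h+1) T (fun p hp => by
        have := hpre (U :: p) (by simpa using hp); simp at this ⊢; omega)
        (by simp at hC ⊢; omega)
      simp [split, this]
    | F =>
      have := ih h T (fun p hp => by
        have := hpre (F :: p) (by simpa using hp); simp at this ⊢; omega)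
        (by simp at hC ⊢; omega)
      simp [split, this]
    | D =>
      have h1 : 1 ≤ h := by simpa using hpre [D] ⟨C, rfl⟩
      obtain ⟨h', rfl⟩ : ∃ h', h = h' + 1 := ⟨h - 1, by omega⟩
      have := ih h' T (fun p hp => by
        have := hpre (D :: p) (by simpa using hp); simp at this ⊢; omega)
        (by simp at hC ⊢; omega)
      simp [split, this]

lemma cu_split_shape (C T : List SStep) : cu (C ++ D :: T) = cu C + cu T := by simp
lemma cd_split_shape (C T : List SStep) : cd (C ++ D :: T) = cd C + 1 + cd T := by simp; omega
lemma cf_split_shape (C T : List SStep) : cf (C ++ D :: T) = cf C + cf T := by simp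
/-- structural hump predicate -/
def HS (P : List SStep) (i : ℕ) : Prop :=
  ∃ A k B, P = A ++ U :: (flats k ++ D :: B) ∧ A.length = i

def hcore (E r : List SStep) (o : Option ((List SStep × ℕ) × Bool)) : List SStep × ℕ :=
  match o with
  | none => (U :: (flats r.length ++ D :: E), 0)
  | some ((Q, j), false) => (U :: (E ++ D :: Q), 2 + E.length + j)
  | some ((Q, j), true) => (U :: (Q ++ D :: E), 1 + j)

def phi : List SStep → Option ((List SStep × ℕ) × Bool)
  | [] => none
  | F :: t => (phi t).map (fun x => ((F :: x.1.1, x.1.2 + 1), x.2))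
  | U :: t => some (hcore (split 0 t).1 (split 0 t).2 (phi (split 0 t).2), false)
  | D :: t => some (hcore (split 0 (com t)).1 (split 0 (com t)).2 (phi (split 0 (com t)).2), true)
termination_by w => w.length
decreasing_by
  · simp
  · simpa using Nat.lt_succ_of_le (split_snd_length_le t 0)
  · simpa using Nat.lt_succ_of_le ((split_snd_length_le (com t) 0).trans (le_of_eq (com_length t)))

def psi : List SStep × ℕ → List SStep
  | ([], _) => []
  | (D :: _, _) => []
  | (F :: P, i) => F :: psi (P, i - 1)
  | (U :: P, i) =>
      if i = 0 then U :: ((split 0 P).2 ++ D :: (split 0 P).1)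
      else if i ≤ (split 0 P).1.length then
        U :: ((split 0 P).2 ++ D :: com (psi ((split 0 P).1, i - 1)))
      else
        U :: ((split 0 P).1 ++ D :: psi ((split 0 P).2, i - (split 0 P).1.length - 2))
termination_by x => x.1.length
decreasing_by
  · simp
  · simpa using Nat.lt_succ_of_le (split_fst_length_le P 0)
  · simpa using Nat.lt_succ_of_le (split_snd_length_le P 0)

def psitag (x : (List SStep × ℕ) × Bool) : List SStep :=
  if x.2 then com (psi x.1) else psi x.1

def bal (w : List SStep) : Prop := cu w = cd w
def nonneg (w : List SStep) : Prop := ∀ p, p <+: w → cd p ≤ cu p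

/-- Lemma A -/
lemma phi_eq_none {w : List SStep} (h : phi w = none) : w = flats w.length := by
  induction w with
  | nil => rfl
  | cons a t ih =>
    cases a with
    | U => simp [phi] at h
    | D => simp [phi] at h
    | F =>
      rw [phi] at h
      simp only [Option.map_eq_none_iff] at h
      rw [flats, List.length_cons, List.replicate_succ]
      exact congrArg (F :: ·) (ih h)

lemma phi_flats (n : ℕ) : phi (flats n) = none := by
  induction n with
  | zero => simp [flats, phi]
  | succ n ih =>
    rw [flats, List.replicate_succ, phi]
    rw [show List.replicate n F = flats n from rfl, ih]
    rfl
lemma HS_iff_isHumpAt (P : List SStep) (i : ℕ) : HS P i ↔ IsHumpAt P i := by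
  constructor
  · rintro ⟨A, k, B, rfl, rfl⟩
    refine ⟨k, ?_, ?_, ?_⟩
    · rw [List.getElem?_append_right (le_refl _)]
      simp
    · intro j hj
      rw [List.getElem?_append_right (by omega)]
      have e : A.length + 1 + j - A.length = j + 1 := by omega
      rw [e]
      simp only [List.getElem?_cons_succ]
      simp [List.getElem?_append, flats, List.getElem?_replicate, hj]
    · rw [List.getElem?_append_right (by omega)]
      have e : A.length + 1 + k - A.length = k + 1 := by omega
      rw [e]
      simp only [List.getElem?_cons_succ]
      rw [List.getElem?_append_right (by simp [flats])]
      simp [flats]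
  · rintro ⟨k, h1, h2, h3⟩
    have hlen : i + 1 + k < P.length := by
      by_contra hc
      rw [List.getElem?_eq_none (by omega)] at h3
      exact absurd h3 (by simp)
    have hi : i < P.length := by omega
    refine ⟨P.take i, k, P.drop (i + 2 + k), ?_, P.length_take_of_le (by omega)⟩
    have e1 : P.drop i = U :: P.drop (i + 1) := by
      rw [List.drop_eq_getElem_cons hi]
      congr 1
      have := h1
      rw [List.getElem?_eq_getElem hi] at this
      exact Option.some.inj this
    have e3 : P.drop (i + 1 + k) = D :: P.drop (i + 2 + k) := by
      rw [List.drop_eq_getElem_cons hlen]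
      have := h3
      rw [List.getElem?_eq_getElem hlen] at this
      have h4 := Option.some.inj this
      rw [h4]
      have : i + 1 + k + 1 = i + 2 + k := by omega
      rw [this]
    have e2 : P.drop (i + 1) = flats k ++ P.drop (i + 1 + k) := by
      have htk : (P.drop (i+1)).take k = flats k := by
        apply List.ext_getElem?
        intro j
        rw [List.getElem?_take, List.getElem?_drop]
        simp only [flats, List.getElem?_replicate]
        by_cases hjk : j < k
        · simp only [if_pos hjk]
          exact h2 j hjk
        · simp [hjk]
      conv_lhs => rw [← List.take_append_drop k (P.drop (i+1))]
      rw [htk, List.drop_drop]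
    conv_lhs => rw [← List.take_append_drop i P, e1, e2, e3]
lemma prefix_append_cases {p A B : List SStep} (h : p <+: A ++ B) :
    p <+: A ∨ ∃ q, p = A ++ q ∧ q <+: B := by
  by_cases hl : p.length ≤ A.length
  · exact Or.inl (List.prefix_of_prefix_length_le h (List.prefix_append A B) hl)
  · right
    have hA : A <+: p := List.prefix_of_prefix_length_le (List.prefix_append A B) h (by omega)
    rcases hA with ⟨q, rfl⟩
    refine ⟨q, rfl, ?_⟩
    rcases h with ⟨rest, hrest⟩
    rw [List.append_assoc] at hrest
    exact ⟨rest, List.append_cancel_left hrest⟩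

lemma phi_com (x : List SStep) : phi (com x) = (phi x).map (fun y => (y.1, !y.2)) := by
  induction x with
  | nil => simp [phi, com]
  | cons a t ih =>
    cases a with
    | U =>
      show phi (D :: com t) = _
      rw [phi, phi]
      simp [com_com]
    | D =>
      show phi (U :: com t) = _
      rw [phi, phi]
      simp
    | F =>
      show phi (F :: com t) = _
      rw [phi, phi, ih]
      cases hp : phi t <;> simp

lemma nonneg_shape {X Y : List SStep} (hX : ∀ p, p <+: X → cd p ≤ cu p) (hXb : cd X ≤ cu X)
    (hY : ∀ p, p <+: Y → cd p ≤ cu p) : nonneg (U :: (X ++ D :: Y)) := by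
  intro p hp
  rcases List.prefix_cons_iff.mp hp with rfl | ⟨q, rfl, hq⟩
  · simp
  · rcases prefix_append_cases hq with hqX | ⟨q', rfl, hq'⟩
    · have := hX q hqX; simp; omega
    · rcases List.prefix_cons_iff.mp hq' with rfl | ⟨q'', rfl, hq''⟩
      · have := hXb; simp; omega
      · have h1 := hY q'' hq''
        have h2 := hXb
        simp; omega

/-- main forward invariant -/
lemma hcore_spec (s : List SStep) (hs : cd s = cu s + 1)
    (IH : bal (split 0 s).2 → ∀ P i ε, phi (split 0 s).2 = some ((P, i), ε) →
      bal P ∧ nonneg P ∧ HS P i ∧ cu P = cu (split 0 s).2 ∧ cf P = cf (split 0 s).2) :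
    ∀ P i, hcore (split 0 s).1 (split 0 s).2 (phi (split 0 s).2) = (P, i) →
      bal P ∧ nonneg P ∧ HS P i ∧ cu P = cu s + 1 ∧ cf P = cf s := by
  intro P i hP
  obtain ⟨hsplit, hpre0, hbalE0⟩ := split_spec s 0 (by omega)
  set E := (split 0 s).1 with hE
  set r := (split 0 s).2 with hr
  have hpre : ∀ p, p <+: E → cd p ≤ cu p := fun p hp => by have := hpre0 p hp; omega
  have hbalE : cd E = cu E := by omega
  have hc1 : cu s = cu E + cu r := by conv_lhs => rw [hsplit]
                                      simp
  have hc2 : cd s = cd E + 1 + cd r := by conv_lhs => rw [hsplit]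
                                          simp; omega
  have hc3 : cf s = cf E + cf r := by conv_lhs => rw [hsplit]
                                      simp
  have hbalr : bal r := by unfold bal; omega
  cases ho : phi r with
  | none =>
    have hrflat : r = flats r.length := phi_eq_none ho
    rw [ho] at hP
    simp only [hcore] at hP
    injection hP with hP1 hP2
    subst hP1; subst hP2
    have hcur : cu r = 0 := by rw [hrflat]; simp
    have hcfr : cf r = r.length := by rw [hrflat]; simp
    refine ⟨?_, ?_, ?_, ?_, ?_⟩
    · unfold bal; simp; omega
    · exact nonneg_shape (fun p hp => by
        have hsub := hp.sublist
        have hl : cd p ≤ cd (flats r.length) := by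
          rw [cd_eq, cd_eq]; exact List.Sublist.count_le D hsub
        simp at hl; omega) (by simp) hpre
    · exact ⟨[], r.length, E, by simp, rfl⟩
    · simp; omega
    · simp; omega
  | some x =>
    obtain ⟨⟨Q, j⟩, ε⟩ := x
    obtain ⟨hbQ, hnQ, hHQ, hcuQ, hcfQ⟩ := IH hbalr Q j ε ho
    unfold bal at hbQ
    cases ε with
    | false =>
      rw [ho] at hP
      simp only [hcore] at hP
      injection hP with hP1 hP2
      subst hP1; subst hP2
      refine ⟨?_, ?_, ?_, ?_, ?_⟩
      · unfold bal; simp; omega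
      · exact nonneg_shape hpre (le_of_eq hbalE) hnQ
      · obtain ⟨A, k, B, rfl, hlen⟩ := hHQ
        exact ⟨U :: (E ++ D :: A), k, B, by simp, by simp [hlen]; omega⟩
      · simp; omega
      · simp; omega
    | true =>
      rw [ho] at hP
      simp only [hcore] at hP
      injection hP with hP1 hP2
      subst hP1; subst hP2
      refine ⟨?_, ?_, ?_, ?_, ?_⟩
      · unfold bal; simp; omega
      · exact nonneg_shape hnQ (by omega) hpre
      · obtain ⟨A, k, B, rfl, hlen⟩ := hHQ
        refine ⟨U :: A, k, B ++ D :: E, by simp, by simp [hlen]; omega⟩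
      · simp; omega
      · simp; omega

lemma phi_good : ∀ (w : List SStep), bal w → ∀ P i ε, phi w = some ((P, i), ε) →
    bal P ∧ nonneg P ∧ HS P i ∧ cu P = cu w ∧ cf P = cf w
  | [] => by intro _ P i ε h; simp [phi] at h
  | F :: t => by
    intro hb P i ε h
    rw [phi] at h
    rcases Option.map_eq_some_iff.mp h with ⟨⟨⟨P₂, i₂⟩, ε₂⟩, hp2, heq⟩
    obtain ⟨⟨h1, h2⟩, h3⟩ : (F :: P₂ = P ∧ i₂ + 1 = i) ∧ ε₂ = ε := by
      simpa using heq
    subst h1; subst h2; subst h3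
    have hbt : bal t := by unfold bal at hb ⊢; simp at hb; omega
    obtain ⟨hbP, hnP, hHP, hcu, hcf⟩ := phi_good t hbt P₂ i₂ ε₂ hp2
    refine ⟨?_, ?_, ?_, ?_, ?_⟩
    · unfold bal at hbP ⊢; simp; omega
    · intro p hp
      rcases List.prefix_cons_iff.mp hp with rfl | ⟨q, rfl, hq⟩
      · simp
      · have := hnP q hq; simp; omega
    · obtain ⟨A, k, B, rfl, hlen⟩ := hHP
      exact ⟨F :: A, k, B, rfl, by simp [hlen]⟩
    · simp; omega
    · simp; omega
  | U :: t => by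
    intro hb P i ε h
    rw [phi] at h
    have hs : cd t = cu t + 1 := by unfold bal at hb; simp at hb; omega
    have hIH : bal (split 0 t).2 → ∀ P i ε, phi (split 0 t).2 = some ((P, i), ε) →
        bal P ∧ nonneg P ∧ HS P i ∧ cu P = cu (split 0 t).2 ∧ cf P = cf (split 0 t).2 :=
      fun hbr => phi_good (split 0 t).2 hbr
    injection h with h'
    injection h' with h1 h2
    obtain ⟨a1, a2, a3, a4, a5⟩ := hcore_spec t hs hIH P i h1
    refine ⟨a1, a2, a3, ?_, ?_⟩
    · simp at a4 ⊢; omega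
    · simp at a5 ⊢; omega
  | D :: t => by
    intro hb P i ε h
    rw [phi] at h
    have hs : cd (com t) = cu (com t) + 1 := by
      unfold bal at hb; simp at hb ⊢; omega
    have hIH : bal (split 0 (com t)).2 → ∀ P i ε, phi (split 0 (com t)).2 = some ((P, i), ε) →
        bal P ∧ nonneg P ∧ HS P i ∧ cu P = cu (split 0 (com t)).2 ∧ cf P = cf (split 0 (com t)).2 :=
      fun hbr => phi_good (split 0 (com t)).2 hbr
    injection h with h'
    injection h' with h1 h2
    obtain ⟨a1, a2, a3, a4, a5⟩ := hcore_spec (com t) hs hIH P i h1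
    refine ⟨a1, a2, a3, ?_, ?_⟩
    · unfold bal at hb; simp at hb a4 ⊢; omega
    · simp at a5 ⊢; omega
termination_by w => w.length
decreasing_by
  · simp
  · simpa using Nat.lt_succ_of_le (split_snd_length_le t 0)
  · simpa using Nat.lt_succ_of_le ((split_snd_length_le (com t) 0).trans (le_of_eq (com_length t)))
lemma prefix_flats_counts {p : List SStep} {n : ℕ} (hp : p <+: flats n) :
    cu p = 0 ∧ cd p = 0 := by
  constructor
  · have : cu p ≤ cu (flats n) := by
      rw [cu_eq, cu_eq]; exact List.Sublist.count_le U hp.sublist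
    simpa using this
  · have : cd p ≤ cd (flats n) := by
      rw [cd_eq, cd_eq]; exact List.Sublist.count_le D hp.sublist
    simpa using this

lemma ccore (s : List SStep) (hs : cd s = cu s + 1)
    (IH : bal (split 0 s).2 → ∀ x, phi (split 0 s).2 = some x → psitag x = (split 0 s).2)
    (IHgood : bal (split 0 s).2 → ∀ P i ε, phi (split 0 s).2 = some ((P, i), ε) →
      bal P ∧ nonneg P ∧ HS P i ∧ cu P = cu (split 0 s).2 ∧ cf P = cf (split 0 s).2) :
    psi (hcore (split 0 s).1 (split 0 s).2 (phi (split 0 s).2)) = U :: s := by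
  obtain ⟨hsplit, hpre0, hbalE0⟩ := split_spec s 0 (by omega)
  set E := (split 0 s).1 with hE
  set r := (split 0 s).2 with hr
  have hc1 : cu s = cu E + cu r := by conv_lhs => rw [hsplit]
                                      simp
  have hc2 : cd s = cd E + 1 + cd r := by conv_lhs => rw [hsplit]
                                          simp; omega
  have hbalr : bal r := by unfold bal; omega
  cases ho : phi r with
  | none =>
    have hrflat : r = flats r.length := phi_eq_none ho
    simp only [hcore]
    rw [psi]
    have hsp : split 0 (flats r.length ++ D :: E) = (flats r.length, E) := by
      apply split_eq
      · intro p hp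
        obtain ⟨e1, e2⟩ := prefix_flats_counts hp
        omega
      · simp
    rw [hsp]
    rw [← hrflat, hsplit]
    simp
  | some x =>
    obtain ⟨⟨Q, j⟩, ε⟩ := x
    obtain ⟨hbQ, hnQ, hHQ, _, _⟩ := IHgood hbalr Q j ε ho
    unfold bal at hbQ
    cases ε with
    | false =>
      simp only [ho, hcore]
      rw [psi]
      have hsp : split 0 (E ++ D :: Q) = (E, Q) := by
        apply split_eq
        · intro p hp; have := hpre0 p hp; omega
        · omega
      rw [hsp]
      have hne : ¬(2 + E.length + j = 0) := by omega
      have hnle : ¬(2 + E.length + j ≤ E.length) := by omega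
      rw [if_neg hne, if_neg hnle]
      have : 2 + E.length + j - E.length - 2 = j := by omega
      rw [this]
      have hpsi : psi (Q, j) = r := IH hbalr ((Q, j), false) ho
      rw [hpsi, hsplit]
    | true =>
      simp only [ho, hcore]
      rw [psi]
      have hsp : split 0 (Q ++ D :: E) = (Q, E) := by
        apply split_eq
        · intro p hp; have := hnQ p hp; omega
        · omega
      rw [hsp]
      have hne : ¬(1 + j = 0) := by omega
      have hjQ : j + 1 ≤ Q.length := by
        obtain ⟨A, k, B, rfl, hlen⟩ := hHQ
        simp [← hlen]
      have hle : 1 + j ≤ Q.length := by omega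
      rw [if_neg hne, if_pos hle]
      have : 1 + j - 1 = j := by omega
      rw [this]
      have hpsi : com (psi (Q, j)) = r := IH hbalr ((Q, j), true) ho
      rw [hpsi, hsplit]

lemma psi_phi : ∀ (w : List SStep), bal w → ∀ x, phi w = some x → psitag x = w
  | [] => by intro _ x h; simp [phi] at h
  | F :: t => by
    intro hb x h
    rw [phi] at h
    rcases Option.map_eq_some_iff.mp h with ⟨⟨⟨P₂, i₂⟩, ε₂⟩, hp2, heq⟩
    subst heq
    have hbt : bal t := by unfold bal at hb ⊢; simp at hb; omega
    have hrec := psi_phi t hbt ((P₂, i₂), ε₂) hp2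
    show psitag ((F :: P₂, i₂ + 1), ε₂) = F :: t
    have hF : psitag ((F :: P₂, i₂ + 1), ε₂) = F :: psitag ((P₂, i₂), ε₂) := by
      cases ε₂ <;> simp [psitag] <;> rw [psi] <;> simp
    rw [hF, hrec]
  | U :: t => by
    intro hb x h
    rw [phi] at h
    have hs : cd t = cu t + 1 := by unfold bal at hb; simp at hb; omega
    have hcc := ccore t hs (fun hbr => psi_phi (split 0 t).2 hbr) (fun hbr => phi_good (split 0 t).2 hbr)
    obtain rfl := (Option.some.inj h).symm
    simpa [psitag] using hcc
  | D :: t => by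
    intro hb x h
    rw [phi] at h
    have hs : cd (com t) = cu (com t) + 1 := by
      unfold bal at hb; simp at hb ⊢; omega
    have hcc := ccore (com t) hs (fun hbr => psi_phi (split 0 (com t)).2 hbr)
      (fun hbr => phi_good (split 0 (com t)).2 hbr)
    obtain rfl := (Option.some.inj h).symm
    simp only [psitag, if_pos]
    rw [hcc]
    simp
termination_by w => w.length
decreasing_by
  · simp
  · simpa using Nat.lt_succ_of_le (split_snd_length_le t 0)
  · simpa using Nat.lt_succ_of_le ((split_snd_length_le (com t) 0).trans (le_of_eq (com_length t)))
lemma flats_split {k : ℕ} {C c : List SStep} (h : flats k = C ++ c) :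
    C = flats C.length ∧ c = flats c.length := by
  have hm : ∀ b ∈ C ++ c, b = F := by
    intro b hb
    have hbf : b ∈ flats k := h ▸ hb
    rw [flats, List.mem_replicate] at hbf
    exact hbf.2
  exact ⟨List.eq_replicate_of_mem (fun b hb => hm b (List.mem_append_left _ hb)),
    List.eq_replicate_of_mem (fun b hb => hm b (List.mem_append_right _ hb))⟩

lemma phi_psi0 : ∀ (N : ℕ) (P : List SStep) (i : ℕ), P.length ≤ N → bal P → nonneg P → HS P i →
    bal (psi (P, i)) ∧ cu (psi (P, i)) = cu P ∧ cf (psi (P, i)) = cf P ∧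
    phi (psi (P, i)) = some ((P, i), false) := by
  intro N
  induction N with
  | zero =>
    intro P i hN _ _ hH
    obtain ⟨A, k, B, rfl, _⟩ := hH
    simp at hN
  | succ N IH =>
    intro P i hN hb hn hH
    obtain ⟨A, k, B, hPeq, hA⟩ := hH
    match P, hPeq with
    | [], hPeq => exact absurd hPeq (by simp)
    | D :: P', hPeq =>
      exfalso
      have := hn [D] ⟨P', rfl⟩
      simp at this
    | F :: P', hPeq =>
      -- A = F :: A'
      match A, hPeq, hA with
      | [], hPeq, hA => exact absurd (List.cons.inj hPeq).1 (by simp)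
      | (a :: A'), hPeq, hA =>
        obtain ⟨ha, hP'⟩ := List.cons.inj hPeq
        subst ha
        have hbP' : bal P' := by unfold bal at hb ⊢; simp at hb; omega
        have hnP' : nonneg P' := by
          intro p hp
          have := hn (F :: p) (by simpa using hp)
          simp at this; omega
        have hHP' : HS P' (i - 1) := ⟨A', k, B, hP', by simp [← hA]⟩
        have hi1 : i = A'.length + 1 := by simp [← hA]
        obtain ⟨b1, b2, b3, b4⟩ := IH P' (i-1) (by simp at hN; omega) hbP' hnP' hHP'
        have hpsiF : psi (F :: P', i) = F :: psi (P', i - 1) := by rw [psi]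
        rw [hpsiF]
        refine ⟨?_, ?_, ?_, ?_⟩
        · unfold bal at b1 ⊢; simp; omega
        · simp; omega
        · simp; omega
        · rw [phi, b4]
          simp
          omega
    | U :: P', hPeq =>
      have hs : cd P' = cu P' + 1 := by unfold bal at hb; simp at hb; omega
      obtain ⟨hsplit, hpre0, hbalE0⟩ := split_spec P' 0 (by omega)
      set C := (split 0 P').1 with hC
      set T := (split 0 P').2 with hT
      have hpre : ∀ p, p <+: C → cd p ≤ cu p := fun p hp => by have := hpre0 p hp; omega
      have hbalC : cd C = cu C := by omega
      have hcuP' : cu P' = cu C + cu T := by rw [hsplit, cu_split_shape]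
      have hcdP' : cd P' = cd C + 1 + cd T := by rw [hsplit, cd_split_shape]
      have hcfP' : cf P' = cf C + cf T := by rw [hsplit, cf_split_shape]
      have hbalT : bal T := by unfold bal; omega
      have hnT : nonneg T := by
        intro p hp
        have hpp : (U :: (C ++ D :: p)) <+: (U :: P') := by
          rw [hsplit]
          obtain ⟨q, hq⟩ := hp
          exact ⟨q, by simp [← hq]⟩
        have := hn _ hpp
        simp at this
        omega
      have hCle : C.length ≤ N := by
        have h1 := split_fst_length_le P' 0
        simp at hN
        rw [← hC] at h1
        omega
      have hTle : T.length ≤ N := by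
        have h1 := split_snd_length_le P' 0
        simp at hN
        rw [← hT] at h1
        omega
      -- case analysis on A
      match A, hPeq, hA with
      | [], hPeq, hA =>
        -- i = 0, P' = flats k ++ D :: B
        obtain ⟨-, hP'⟩ := List.cons.inj hPeq
        have hi0 : i = 0 := by simp [← hA]
        subst hi0
        have hse : split 0 (flats k ++ D :: B) = (flats k, B) :=
          split_eq (flats k) 0 B (fun p hp => by
            obtain ⟨e1, e2⟩ := prefix_flats_counts hp; omega) (by simp)
        have hCf : C = flats k := by rw [hC, hP', hse]
        have hTB : T = B := by rw [hT, hP', hse]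
        rw [psi]
        rw [← hC, ← hT, if_pos rfl]
        have hnB : nonneg T := hnT
        have hbB : bal T := hbalT
        refine ⟨?_, ?_, ?_, ?_⟩
        · unfold bal at hbB ⊢
          have : cu C = 0 ∧ cd C = 0 := by rw [hCf]; simp
          simp; omega
        · have : cu C = 0 := by rw [hCf]; simp
          simp; omega
        · have : cf C = C.length := by rw [hCf]; simp
          have h2 : C.length = k := by rw [hCf]; simp
          simp; omega
        · rw [phi]
          have hsp2 : split 0 (T ++ D :: C) = (T, C) :=
            split_eq T 0 C (fun p hp => by have := hnB p hp; unfold bal at *; omega)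
              (by unfold bal at hbB; omega)
          rw [hsp2]
          have : phi C = none := by rw [hCf]; exact phi_flats _
          rw [this]
          simp only [hcore]
          rw [hCf]
          simp only [flats_length]
          rw [← hCf, ← hsplit]
      | (a :: A'), hPeq, hA =>
        obtain ⟨ha, hP'⟩ := List.cons.inj hPeq
        subst ha
        -- P' = A' ++ U :: (flats k ++ D :: B) and P' = C ++ D :: T
        have hkey : A' ++ (U :: (flats k ++ D :: B)) = C ++ (D :: T) :=
          hP'.symm.trans hsplit
        rcases List.append_eq_append_iff.mp hkey with ⟨a', hCa, heq2⟩ | ⟨c', hAc, heq2⟩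
        · -- C = A' ++ a', U :: (flats k ++ D :: B) = a' ++ D :: T
          match a', heq2 with
          | [], heq2 => exact absurd (List.cons.inj heq2).1 (by simp)
          | (x :: C₂), heq2 =>
            obtain ⟨hx, heq3⟩ := List.cons.inj heq2
            subst hx
            -- flats k ++ D :: B = C₂ ++ D :: T
            rcases List.append_eq_append_iff.mp heq3 with ⟨a2, hC2, heq4⟩ | ⟨c2, hfl, heq4⟩
            · -- C₂ = flats k ++ a2, D :: B = a2 ++ D :: T
              match a2, heq4 with
              | [], heq4 =>
                -- C₂ = flats k, B = T : contradiction via heights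
                exfalso
                simp at hC2 heq4
                subst hC2
                have h1 := hpre A' ⟨U :: flats k, by rw [hCa]⟩
                have h2 := hbalC
                rw [hCa] at h2
                simp at h1 h2
                omega
              | (y :: C₄), heq4 =>
                obtain ⟨hy, hB⟩ := List.cons.inj heq4
                subst hy
                -- C = A' ++ U :: (flats k ++ D :: C₄), B = C₄ ++ D :: T
                have hCfull : C = A' ++ U :: (flats k ++ D :: C₄) := by rw [hCa, hC2]
                have hHC : HS C A'.length := ⟨A', k, C₄, hCfull, rfl⟩
                obtain ⟨b1, b2, b3, b4⟩ := IH C A'.length hCle (by unfold bal; omega) hpre hHC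
                have hi : i = A'.length + 1 := by simp [← hA]
                rw [psi]
                rw [← hC, ← hT]
                have hig : ¬ (i = 0) := by omega
                have hile : i ≤ C.length := by
                  rw [hCfull]; simp; omega
                rw [if_neg hig, if_pos hile]
                have hii : i - 1 = A'.length := by omega
                rw [hii]
                set x := psi (C, A'.length) with hxdef
                refine ⟨?_, ?_, ?_, ?_⟩
                · unfold bal at b1 hbalT ⊢; simp; omega
                · unfold bal at b1; simp; omega
                · simp; omega
                · rw [phi]
                  have hsp2 : split 0 (T ++ D :: com x) = (T, com x) :=
                    split_eq T 0 (com x) (fun p hp => by have := hnT p hp; omega)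
                      (by unfold bal at hbalT; omega)
                  rw [hsp2]
                  have hphicom : phi (com x) = some ((C, A'.length), true) := by
                    rw [phi_com, b4]; rfl
                  rw [hphicom]
                  simp only [hcore]
                  rw [← hsplit]
                  simp [hi]
                  omega
            · -- flats k = C₂ ++ c2, D :: T = c2 ++ D :: B
              obtain ⟨hC2f, hc2f⟩ := flats_split hfl
              match c2, heq4, hc2f with
              | [], heq4, _ =>
                exfalso
                have hC2f2 : C = A' ++ U :: flats k := by
                  rw [hCa, (by simpa using hfl.symm : C₂ = flats k)]
                have h1 := hpre A' ⟨U :: flats k, by rw [hC2f2]⟩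
                have h2 := hbalC
                rw [hC2f2] at h2
                simp at h1 h2
                omega
              | (z :: c2'), heq4, hc2f =>
                exfalso
                have hz : z = F := by
                  have h5 := hc2f
                  simp [flats, List.replicate_succ] at h5
                  exact h5.1
                have hDz : D = z := (List.cons.inj heq4).1
                rw [hz] at hDz
                exact absurd hDz (by simp)
        · -- A' = C ++ c', D :: T = c' ++ U :: (flats k ++ D :: B)
          match c', heq2 with
          | [], heq2 => simp at heq2
          | (x :: A''), heq2 =>
            obtain ⟨hx, hTeq⟩ := List.cons.inj heq2
            subst hx
            -- A' = C ++ D :: A'', T = A'' ++ U :: (flats k ++ D :: B)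
            have hHT : HS T A''.length := ⟨A'', k, B, hTeq, rfl⟩
            obtain ⟨b1, b2, b3, b4⟩ := IH T A''.length hTle hbalT hnT hHT
            have hi : i = C.length + 2 + A''.length := by rw [← hA, hAc]; simp; omega
            rw [psi]
            rw [← hC, ← hT]
            have hig : ¬ (i = 0) := by omega
            have hile : ¬ (i ≤ C.length) := by omega
            rw [if_neg hig, if_neg hile]
            have hii : i - C.length - 2 = A''.length := by omega
            rw [hii]
            set y := psi (T, A''.length) with hydef
            refine ⟨?_, ?_, ?_, ?_⟩
            · unfold bal at b1 ⊢; simp; omega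
            · simp; omega
            · simp; omega
            · rw [phi]
              have hsp2 : split 0 (C ++ D :: y) = (C, y) :=
                split_eq C 0 y (fun p hp => by have := hpre p hp; omega) (by omega)
              rw [hsp2, b4]
              simp only [hcore]
              rw [← hsplit]
              simp [hi]
              omega
lemma phi_psitag (P : List SStep) (i : ℕ) (ε : Bool) (hb : bal P) (hn : nonneg P) (hH : HS P i) :
    bal (psitag ((P, i), ε)) ∧ cu (psitag ((P, i), ε)) = cu P ∧
    cf (psitag ((P, i), ε)) = cf P ∧ phi (psitag ((P, i), ε)) = some ((P, i), ε) := by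
  obtain ⟨b1, b2, b3, b4⟩ := phi_psi0 P.length P i le_rfl hb hn hH
  cases ε with
  | false => exact ⟨b1, b2, b3, b4⟩
  | true =>
    unfold bal at b1 ⊢
    simp only [psitag, if_pos]
    refine ⟨by simp; omega, by simp; omega, by simp; omega, ?_⟩
    rw [phi_com, b4]
    rfl

instance : Fintype SStep :=
  ⟨{SStep.U, SStep.F, SStep.D}, by intro x; cases x <;> simp⟩

lemma finite_SS (n : ℕ) : Finite {w : List SStep // IsSuperSchroeder n w} := by
  have hsub : {w : List SStep | IsSuperSchroeder n w} ⊆ {l : List SStep | l.length ≤ 2 * n} := by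
    intro w hw
    obtain ⟨h1, h2⟩ := hw
    have := length_eq_counts w
    simp only [Set.mem_setOf_eq]
    rw [cu_eq, cd_eq, cf_eq] at this
    omega
  exact ((List.finite_length_le SStep (2 * n)).subset hsub).to_subtype

def fwd (n : ℕ) (w : {w : List SStep // IsSuperSchroeder n w}) :
    Option ({p : List SStep × ℕ // IsSchroeder n p.1 ∧ IsHumpAt p.1 p.2} × Bool) :=
  match h : phi w.1 with
  | none => none
  | some ((P, i), ε) =>
    some (⟨(P, i), by
      have hb : bal w.1 := w.2.2
      obtain ⟨g1, g2, g3, g4, g5⟩ := phi_good w.1 hb P i ε h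
      refine ⟨⟨⟨?_, g1⟩, g2⟩, (HS_iff_isHumpAt P i).mp g3⟩
      rw [← cu_eq, ← cf_eq, g4, g5, cu_eq, cf_eq]
      exact w.2.1⟩, ε)

def bwd (n : ℕ) (o : Option ({p : List SStep × ℕ // IsSchroeder n p.1 ∧ IsHumpAt p.1 p.2} × Bool)) :
    {w : List SStep // IsSuperSchroeder n w} :=
  match o with
  | none => ⟨flats n, by
      constructor
      · rw [← cu_eq, ← cf_eq]; simp
      · rw [← cu_eq, ← cd_eq]; simp⟩
  | some (⟨(P, i), hp⟩, ε) => ⟨psitag ((P, i), ε), by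
      have hb : bal P := hp.1.1.2
      have hn : nonneg P := hp.1.2
      have hH : HS P i := (HS_iff_isHumpAt P i).mpr hp.2
      obtain ⟨b1, b2, b3, b4⟩ := phi_psitag P i ε hb hn hH
      constructor
      · rw [← cu_eq, ← cf_eq, b2, b3, cu_eq, cf_eq]
        exact hp.1.1.1
      · rw [← cu_eq, ← cd_eq]
        exact b1⟩

lemma bwd_fwd (n : ℕ) (w : {w : List SStep // IsSuperSchroeder n w}) : bwd n (fwd n w) = w := by
  obtain ⟨w, hw⟩ := w
  apply Subtype.ext
  unfold fwd
  split
  · next h =>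
    have hwf : w = flats w.length := phi_eq_none h
    have hcu : cu w = 0 := by rw [hwf]; simp
    have hlen : w.length = n := by
      have h1 := length_eq_counts w
      have h2 : cu w + cf w = n := by rw [cu_eq, cf_eq]; exact hw.1
      have h3 : cu w = cd w := hw.2
      omega
    show flats n = w
    rw [hwf, hlen]
  · next P i ε h =>
    show psitag ((P, i), ε) = w
    exact psi_phi w hw.2 ((P, i), ε) h

lemma fwd_bwd (n : ℕ) (o : Option ({p : List SStep × ℕ // IsSchroeder n p.1 ∧ IsHumpAt p.1 p.2} × Bool)) :
    fwd n (bwd n o) = o := by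
  match o with
  | none =>
    show fwd n ⟨flats n, _⟩ = none
    unfold fwd
    split
    · rfl
    · next P i ε h => rw [phi_flats] at h; exact absurd h (by simp)
  | some (⟨(P, i), hp⟩, ε) =>
    have hb : bal P := hp.1.1.2
    have hn : nonneg P := hp.1.2
    have hH : HS P i := (HS_iff_isHumpAt P i).mpr hp.2
    obtain ⟨b1, b2, b3, b4⟩ := phi_psitag P i ε hb hn hH
    show fwd n ⟨psitag ((P, i), ε), _⟩ = _
    unfold fwd
    split
    · next h => rw [b4] at h; exact absurd h (by simp)
    · next P' i' ε' h =>
      rw [b4] at h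
      have h' := Option.some.inj h
      obtain ⟨h1, h2⟩ := Prod.mk.inj h'
      obtain ⟨h3, h4⟩ := Prod.mk.inj h1
      subst h2; subst h3; subst h4
      rfl

def mainEquiv (n : ℕ) : {w : List SStep // IsSuperSchroeder n w} ≃
    Option ({p : List SStep × ℕ // IsSchroeder n p.1 ∧ IsHumpAt p.1 p.2} × Bool) :=
  ⟨fwd n, bwd n, bwd_fwd n, fwd_bwd n⟩

end SSAux

theorem superSchroeder_eq_two_mul_humps_add_one (n : ℕ) :
    Nat.card {w : List SStep // IsSuperSchroeder n w} =
      2 * Nat.card {p : List SStep × ℕ //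
        IsSchroeder n p.1 ∧ IsHumpAt p.1 p.2} + 1 := by
  haveI hfin : Finite {w : List SStep // IsSuperSchroeder n w} := SSAux.finite_SS n
  have hequiv := SSAux.mainEquiv n
  haveI hfin2 : Finite (Option ({p : List SStep × ℕ //
      IsSchroeder n p.1 ∧ IsHumpAt p.1 p.2} × Bool)) := Finite.of_equiv _ hequiv
  haveI hfinXB : Finite ({p : List SStep × ℕ //
      IsSchroeder n p.1 ∧ IsHumpAt p.1 p.2} × Bool) :=
    Finite.of_injective (fun x => (some x : Option _)) (Option.some_injective _)
  haveI hfinX : Finite {p : List SStep × ℕ // IsSchroeder n p.1 ∧ IsHumpAt p.1 p.2} :=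
    Finite.of_injective (fun x => ((x, true) : _ × Bool)) (fun a b h => by simpa using congrArg Prod.fst h)
  rw [Nat.card_congr hequiv]
  rw [Nat.card_congr (Equiv.optionEquivSumPUnit _), Nat.card_sum, Nat.card_prod]
  have hb : Nat.card Bool = 2 := by rw [Nat.card_eq_fintype_card]; rfl
  have hp : Nat.card PUnit.{1} = 1 := by rw [Nat.card_eq_fintype_card]; rfl
  rw [hb, hp]
  ring
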